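/- Let I ≥ 1 and δ, c', c'' : Fin I → ℝ such that: δ i > 0 for some i; c' and c'' are nonnegative and nonzero; and convexHull ℝ {c'', 0} ∩ convexHull ℝ {δ, c', 0} = {0}. Then there exists γ : Fin I → ℝ with δ·γ < 0, c'·γ < 0, and c''·γ > 0. -/

import Mathlib

/-- Separating-hyperplane core of Lemma 3 (lem:choice1) of the paper. -/
theorem stmt2 (I : ℕ) (hI : 1 ≤ I) (δ c' c'' : Fin I → ℝ)
    (hδ : ∃ i, 0 < δ i)
    (hc'_nn : ∀ i, 0 ≤ c' i) (hc'_ne : c' ≠ 0)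
    (hc''_nn : ∀ i, 0 ≤ c'' i) (hc''_ne : c'' ≠ 0)
    (hhull : convexHull ℝ ({c'', 0} : Set (Fin I → ℝ)) ∩
      convexHull ℝ ({δ, c', 0} : Set (Fin I → ℝ)) = {0}) :
    ∃ γ : Fin I → ℝ, (∑ i, δ i * γ i) < 0 ∧ (∑ i, c' i * γ i) < 0 ∧
      0 < ∑ i, c'' i * γ i := by
  obtain ⟨i₀, hi₀⟩ := hδ
  set K : Set (Fin I → ℝ) := convexHull ℝ ({δ, c', -c''} : Set (Fin I → ℝ)) with hK
  have h0K : (0 : Fin I → ℝ) ∉ K := by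
    intro h0
    rw [hK, convexHull_insert (Set.insert_nonempty _ _), mem_convexJoin] at h0
    obtain ⟨a, ha, z, hz, h0seg⟩ := h0
    rw [Set.mem_singleton_iff] at ha
    rw [ha] at h0seg
    rw [convexHull_pair] at hz
    obtain ⟨p, q, hp, hq, hpq, hzeq⟩ := hz
    obtain ⟨t, s, ht, hs, hts, hteq⟩ := h0seg
    have hl2 : 0 ≤ s * p := mul_nonneg hs hp
    have hl3 : 0 ≤ s * q := mul_nonneg hs hq
    have hsum : t + s * p + s * q = 1 := by
      have : s * p + s * q = s := by rw [← mul_add, hpq, mul_one]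
      linarith
    have heq : (s * q) • c'' = t • δ + (s * p) • c' := by
      have h := hteq
      rw [← hzeq] at h
      funext i
      have hi := congrFun h i
      simp only [Pi.add_apply, Pi.smul_apply, Pi.zero_apply, Pi.neg_apply,
        smul_eq_mul] at hi ⊢
      linear_combination -hi
    -- the point (s*q) • c'' lies in both hulls
    have hmem1 : (s * q) • c'' ∈ convexHull ℝ ({c'', 0} : Set (Fin I → ℝ)) := by
      rw [convexHull_pair]
      refine ⟨s * q, 1 - s * q, hl3, by linarith, by ring, ?_⟩
      simp
    have hmem2 : (s * q) • c'' ∈ convexHull ℝ ({δ, c', 0} : Set (Fin I → ℝ)) := by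
      rw [heq]
      have hconv := convex_convexHull ℝ ({δ, c', 0} : Set (Fin I → ℝ))
      have h3 : t • δ + (s * p) • c' =
          ∑ j : Fin 3, ![t, s * p, s * q] j • ![δ, c', 0] j := by
        simp [Fin.sum_univ_three]
      rw [h3]
      refine hconv.sum_mem ?_ ?_ ?_
      · intro j _
        fin_cases j
        · simpa using ht
        · simpa using hl2
        · simpa using hl3
      · simpa [Fin.sum_univ_three] using hsum
      · intro j _
        fin_cases j <;> exact subset_convexHull ℝ _ (by simp)
    have hzero : (s * q) • c'' = 0 := by
      have : (s * q) • c'' ∈ ({0} : Set (Fin I → ℝ)) := hhull ▸ ⟨hmem1, hmem2⟩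
      simpa using this
    have hl3z : s * q = 0 := by
      by_contra h
      exact hc''_ne (by simpa [h] using smul_eq_zero.mp hzero)
    rw [hl3z, zero_smul] at heq
    have hi : t * δ i₀ + (s * p) * c' i₀ = 0 := by
      have := congrFun heq i₀
      simpa [Pi.add_apply, Pi.smul_apply] using this.symm
    have hl1z : t = 0 := by
      nlinarith [mul_nonneg hl2 (hc'_nn i₀), mul_nonneg ht hi₀.le]
    have hl2o : s * p = 1 := by rw [hl1z] at hsum; linarith
    rw [hl1z, hl2o, zero_smul, zero_add, one_smul] at heq
    exact hc'_ne heq.symm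
  have hKconv : Convex ℝ K := convex_convexHull ℝ _
  have hKclosed : IsClosed K :=
    (((Set.finite_singleton _).insert _ |>.insert _).isCompact_convexHull (𝕜 := ℝ)).isClosed
  obtain ⟨f, u, hfu, hu0⟩ := geometric_hahn_banach_closed_point hKconv hKclosed h0K
  have hu : u < 0 := by simpa using hu0
  have hfδ : f δ < 0 := lt_trans (hfu δ (subset_convexHull ℝ _ (by simp))) hu
  have hfc' : f c' < 0 := lt_trans (hfu c' (subset_convexHull ℝ _ (by simp))) hu
  have hfc'' : 0 < f c'' := by
    have := lt_trans (hfu (-c'') (subset_convexHull ℝ _ (by simp))) hu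
    simpa using this
  have key : ∀ x : Fin I → ℝ,
      f x = ∑ i, x i * f (fun j => if i = j then 1 else 0) := by
    intro x
    have := LinearMap.pi_apply_eq_sum_univ
      (f : (Fin I → ℝ) →ₗ[ℝ] ℝ) x
    simpa [smul_eq_mul] using this
  exact ⟨fun i => f (fun j => if i = j then 1 else 0),
    key δ ▸ hfδ, key c' ▸ hfc', key c'' ▸ hfc''⟩
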